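/- Let X be a normed space, let ℱ : X → ℂ be linear, and let ‖·‖_A be a second seminorm on X (thought of as φ ↦ ‖A(x,D)φ‖_{L^1}). Suppose that for every sequence (φ_i) in X with ‖φ_i‖ → 0 and sup_i ‖φ_i‖_A < ∞ one has ℱ(φ_i) → 0. Then for every ε > 0 there exists θ > 0 such that |ℱ(φ)| ≤ θ‖φ‖ + ε‖φ‖_A for all φ ∈ X. Conversely, if such a θ exists for every ε > 0, then ℱ(φ_i) → 0 along every sequence with ‖φ_i‖ → 0 and sup_i ‖φ_i‖_A < ∞. -/

import Mathlib

open Filter Topology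

/-- abstract characterization of charges: a linear functional `F` on a normed
space `X`, together with a second seminorm `pA` (thought of as `φ ↦ ‖A(x,D)φ‖_{L^1}`),
vanishes along every sequence tending to `0` in norm with bounded `pA` if and only if for
every `ε > 0` there is `θ > 0` with `|F φ| ≤ θ ‖φ‖ + ε pA φ` for all `φ`. -/
theorem stmt5 {X : Type*} [NormedAddCommGroup X] [NormedSpace ℂ X]
    (F : X →ₗ[ℂ] ℂ) (pA : Seminorm ℂ X) :
    (∀ φ : ℕ → X, Tendsto (fun i => ‖φ i‖) atTop (nhds 0) →
        BddAbove (Set.range fun i => pA (φ i)) →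
        Tendsto (fun i => F (φ i)) atTop (nhds 0)) ↔
    (∀ ε : ℝ, 0 < ε → ∃ θ : ℝ, 0 < θ ∧ ∀ φ : X, ‖F φ‖ ≤ θ * ‖φ‖ + ε * pA φ) := by
  constructor
  · intro h ε hε
    have claim : ∃ η : ℝ, 0 < η ∧ ∀ φ : X, ‖φ‖ ≤ η → pA φ ≤ 1 → ‖F φ‖ ≤ ε := by
      by_contra hc
      push_neg at hc
      choose ψ hψ1 hψ2 hψ3 using fun n : ℕ => hc (1 / (n + 1)) (by positivity)
      have h1 : Tendsto (fun n => ‖ψ n‖) atTop (nhds 0) :=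
        squeeze_zero (fun n => norm_nonneg _) hψ1 tendsto_one_div_add_atTop_nhds_zero_nat
      have h2 : BddAbove (Set.range fun n => pA (ψ n)) :=
        ⟨1, by rintro x ⟨n, rfl⟩; exact hψ2 n⟩
      have h3 : Tendsto (fun n => ‖F (ψ n)‖) atTop (nhds 0) := by
        simpa using (h ψ h1 h2).norm
      obtain ⟨n, hn⟩ := (h3.eventually_lt_const hε).exists
      exact absurd (hψ3 n) (not_lt.mpr hn.le)
    obtain ⟨η, hη, hkey⟩ := claim
    refine ⟨ε / η, div_pos hε hη, fun φ => ?_⟩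
    set c : ℝ := ‖φ‖ / η + pA φ with hc
    have hc0 : 0 ≤ c := add_nonneg (div_nonneg (norm_nonneg _) hη.le) (apply_nonneg _ _)
    rcases eq_or_lt_of_le hc0 with hc1 | hc1
    · rw [hc] at hc1
      have h1 : ‖φ‖ / η = 0 := by
        nlinarith [apply_nonneg pA φ, div_nonneg (norm_nonneg φ) hη.le]
      have hφ : φ = 0 := by field_simp at h1; simpa using h1
      simp [hφ]
    · have hcC : (c : ℂ) ≠ 0 := by
        exact_mod_cast ne_of_gt hc1
      set ψ : X := (c : ℂ)⁻¹ • φ with hψ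
      have hnψ : ‖ψ‖ = c⁻¹ * ‖φ‖ := by
        rw [hψ, norm_smul]
        congr 1
        rw [norm_inv]
        congr 1
        simpa using Complex.norm_of_nonneg hc0
      have hpψ : pA ψ = c⁻¹ * pA φ := by
        rw [hψ, map_smul_eq_mul]
        congr 1
        rw [norm_inv]
        congr 1
        simpa using Complex.norm_of_nonneg hc0
      have hle1 : ‖ψ‖ ≤ η := by
        rw [hnψ]
        rw [inv_mul_le_iff₀ hc1]
        have : ‖φ‖ / η ≤ c := le_add_of_nonneg_right (apply_nonneg _ _)
        calc ‖φ‖ = η * (‖φ‖ / η) := by field_simp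
          _ ≤ η * c := by nlinarith
          _ = c * η := mul_comm _ _
      have hle2 : pA ψ ≤ 1 := by
        rw [hpψ, inv_mul_le_iff₀ hc1, mul_one]
        exact le_add_of_nonneg_left (div_nonneg (norm_nonneg _) hη.le)
      have := hkey ψ hle1 hle2
      have hFψ : ‖F ψ‖ = c⁻¹ * ‖F φ‖ := by
        rw [hψ, map_smul, norm_smul, norm_inv]
        congr 2
        simpa using Complex.norm_of_nonneg hc0
      rw [hFψ, inv_mul_le_iff₀ hc1] at this
      calc ‖F φ‖ ≤ c * ε := this
        _ = ε / η * ‖φ‖ + ε * pA φ := by rw [hc]; field_simp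
  · intro h φ hφ hbdd
    obtain ⟨M, hM⟩ := hbdd
    have hM' : ∀ n, pA (φ n) ≤ M := fun n => hM ⟨n, rfl⟩
    have hM0 : 0 ≤ M := le_trans (apply_nonneg _ _) (hM' 0)
    rw [NormedAddCommGroup.tendsto_nhds_zero]
    intro δ hδ
    obtain ⟨θ, hθ, hest⟩ := h (δ / (2 * (M + 1))) (by positivity)
    have hφ' : ∀ᶠ n in atTop, ‖φ n‖ < δ / (2 * θ) := by
      have := hφ.eventually_lt_const (show (0:ℝ) < δ / (2 * θ) by positivity)
      simpa using this
    filter_upwards [hφ'] with n hn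
    have h1 : ‖F (φ n)‖ ≤ θ * ‖φ n‖ + δ / (2 * (M + 1)) * pA (φ n) := hest _
    have h2 : θ * ‖φ n‖ < δ / 2 := by
      have := (mul_lt_mul_iff_right₀ hθ).mpr hn
      calc θ * ‖φ n‖ < θ * (δ / (2 * θ)) := this
        _ = δ / 2 := by field_simp
    have h3 : δ / (2 * (M + 1)) * pA (φ n) ≤ δ / 2 := by
      have := hM' n
      rw [div_mul_eq_mul_div, div_le_div_iff₀ (by positivity) (by norm_num)]
      nlinarith [apply_nonneg pA (φ n)]
    linarith
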